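/- Let ρ_AB = ⊕_i p_i ρ_{A B_i^L} ⊗ ω_{B_i^R} on H_A ⊗ (⊕_i H_{B_i^L} ⊗ H_{B_i^R}), where {p_i} is a probability distribution, ρ_{A B_i^L} are states on H_A ⊗ H_{B_i^L}, and ω_{B_i^R} are states on H_{B_i^R}. Then there exist CPTP maps E : B(H_B) → B(H_B̃) and R : B(H_B̃) → B(H_B), with H_B̃ := ⊕_i H_{B_i^L} (dimension Σ_i d_{B_i^L}), such that (id_A ⊗ R)∘(id_A ⊗ E)(ρ_AB) = ρ_AB; namely E traces out the R-factors within each block and R re-attaches the fixed states ω_{B_i^R}. -/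

import Mathlib

open Matrix
open scoped ComplexOrder

noncomputable def tensorId18 {γ ι κ : Type*}
    (L : Matrix ι ι ℂ → Matrix κ κ ℂ)
    (M : Matrix (γ × ι) (γ × ι) ℂ) : Matrix (γ × κ) (γ × κ) ℂ :=
  fun p q => L (fun i j => M (p.1, i) (q.1, j)) p.2 q.2

noncomputable def IsCPTP18 {ι κ : Type*} [Fintype ι] [Fintype κ]
    (L : Matrix ι ι ℂ →ₗ[ℂ] Matrix κ κ ℂ) : Prop :=
  (∀ X, (L X).trace = X.trace) ∧
  ∀ (d : ℕ) (M : Matrix (Fin d × ι) (Fin d × ι) ℂ), M.PosSemidef →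
    (tensorId18 (fun X => L X) M).PosSemidef

/-! ### Auxiliary definitions and lemmas -/

noncomputable def Emap18' {m : ℕ} (dL dR : Fin m → ℕ)
    (X : Matrix ((i : Fin m) × (Fin (dL i) × Fin (dR i)))
      ((i : Fin m) × (Fin (dL i) × Fin (dR i))) ℂ) :
    Matrix ((i : Fin m) × Fin (dL i)) ((i : Fin m) × Fin (dL i)) ℂ :=
  fun q q' =>
    if h : q'.1 = q.1
    then ∑ r : Fin (dR q.1), X ⟨q.1, (q.2, r)⟩ ⟨q.1, (Fin.cast (congrArg dL h) q'.2, r)⟩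
    else 0

noncomputable def Rmap18' {m : ℕ} (dL dR : Fin m → ℕ)
    (ω : (i : Fin m) → Matrix (Fin (dR i)) (Fin (dR i)) ℂ)
    (Y : Matrix ((i : Fin m) × Fin (dL i)) ((i : Fin m) × Fin (dL i)) ℂ) :
    Matrix ((i : Fin m) × (Fin (dL i) × Fin (dR i)))
      ((i : Fin m) × (Fin (dL i) × Fin (dR i))) ℂ :=
  fun q q' =>
    if h : q'.1 = q.1
    then Y ⟨q.1, q.2.1⟩ ⟨q.1, Fin.cast (congrArg dL h) q'.2.1⟩ *
          ω q.1 q.2.2 (Fin.cast (congrArg dR h) q'.2.2)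
    else 0

noncomputable def Emap18 {m : ℕ} (dL dR : Fin m → ℕ) :
    Matrix ((i : Fin m) × (Fin (dL i) × Fin (dR i)))
      ((i : Fin m) × (Fin (dL i) × Fin (dR i))) ℂ →ₗ[ℂ]
    Matrix ((i : Fin m) × Fin (dL i)) ((i : Fin m) × Fin (dL i)) ℂ where
  toFun := Emap18' dL dR
  map_add' X Y := by
    funext q q'
    by_cases h : q'.1 = q.1 <;>
      simp [Emap18', h, Matrix.add_apply, Finset.sum_add_distrib]
  map_smul' c X := by
    funext q q'
    by_cases h : q'.1 = q.1 <;>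
      simp [Emap18', h, Matrix.smul_apply, Finset.mul_sum, smul_eq_mul]

noncomputable def Rmap18 {m : ℕ} (dL dR : Fin m → ℕ)
    (ω : (i : Fin m) → Matrix (Fin (dR i)) (Fin (dR i)) ℂ) :
    Matrix ((i : Fin m) × Fin (dL i)) ((i : Fin m) × Fin (dL i)) ℂ →ₗ[ℂ]
    Matrix ((i : Fin m) × (Fin (dL i) × Fin (dR i)))
      ((i : Fin m) × (Fin (dL i) × Fin (dR i))) ℂ where
  toFun := Rmap18' dL dR ω
  map_add' X Y := by
    funext q q'
    by_cases h : q'.1 = q.1 <;>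
      simp [Rmap18', h, Matrix.add_apply, add_mul]
  map_smul' c X := by
    funext q q'
    by_cases h : q'.1 = q.1 <;>
      simp [Rmap18', h, Matrix.smul_apply, smul_eq_mul, mul_assoc]

lemma Etr18 {m : ℕ} (dL dR : Fin m → ℕ)
    (X : Matrix ((i : Fin m) × (Fin (dL i) × Fin (dR i)))
      ((i : Fin m) × (Fin (dL i) × Fin (dR i))) ℂ) :
    (Emap18' dL dR X).trace = X.trace := by
  rw [Matrix.trace, Matrix.trace, ← Finset.univ_sigma_univ, ← Finset.univ_sigma_univ,
    Finset.sum_sigma, Finset.sum_sigma]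
  refine Finset.sum_congr rfl fun i _ => ?_
  rw [Fintype.sum_prod_type]
  refine Finset.sum_congr rfl fun l _ => ?_
  simp [Emap18', Matrix.diag]

lemma Rtr18 {m : ℕ} (dL dR : Fin m → ℕ)
    (ω : (i : Fin m) → Matrix (Fin (dR i)) (Fin (dR i)) ℂ)
    (hωtr : ∀ i, (ω i).trace = 1)
    (Y : Matrix ((i : Fin m) × Fin (dL i)) ((i : Fin m) × Fin (dL i)) ℂ) :
    (Rmap18' dL dR ω Y).trace = Y.trace := by
  rw [Matrix.trace, Matrix.trace, ← Finset.univ_sigma_univ, ← Finset.univ_sigma_univ,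
    Finset.sum_sigma, Finset.sum_sigma]
  refine Finset.sum_congr rfl fun i _ => ?_
  rw [Fintype.sum_prod_type]
  refine Finset.sum_congr rfl fun l _ => ?_
  have h1 : ∑ r : Fin (dR i), ω i r r = 1 := hωtr i
  simp only [Rmap18', Matrix.diag, dif_pos rfl, Fin.cast_eq_self, dite_true, eq_self_iff_true]
  rw [← Finset.mul_sum, h1, mul_one]

open scoped MatrixOrder in
lemma psd_sqrt18 {n : Type*} [Fintype n] [DecidableEq n] {M : Matrix n n ℂ}
    (hM : M.PosSemidef) : ∃ B : Matrix n n ℂ, Bᴴ = B ∧ B * B = M := by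
  obtain ⟨X, hX, -, hXX⟩ := CFC.exists_sqrt_of_isSelfAdjoint_of_quasispectrumRestricts
    hM.isHermitian (QuasispectrumRestricts.nnreal_of_nonneg hM.nonneg)
  exact ⟨X, hX, hXX⟩

lemma Ecp18 {m : ℕ} (dL dR : Fin m → ℕ) (d : ℕ)
    (M : Matrix (Fin d × ((i : Fin m) × (Fin (dL i) × Fin (dR i))))
         (Fin d × ((i : Fin m) × (Fin (dL i) × Fin (dR i)))) ℂ)
    (hM : M.PosSemidef) :
    (tensorId18 (fun X => Emap18' dL dR X) M).PosSemidef := by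
  classical
  obtain ⟨B, hBH, hBB⟩ := psd_sqrt18 hM
  have hMent : ∀ a b, ∑ e, star (B e a) * B e b = M a b := by
    intro a b
    have : ∀ e, star (B e a) = Bᴴ a e := fun e => rfl
    simp_rw [this]
    rw [← Matrix.mul_apply, hBH, hBB]
  set C : Matrix ((Fin d × ((i : Fin m) × (Fin (dL i) × Fin (dR i)))) × ((i : Fin m) × Fin (dR i)))
      (Fin d × ((i : Fin m) × Fin (dL i))) ℂ :=
    fun k q => if h : q.2.1 = k.2.1 then
        B k.1 (q.1, ⟨k.2.1, (Fin.cast (congrArg dL h) q.2.2, k.2.2)⟩) else 0 with hC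
  have key : tensorId18 (fun X => Emap18' dL dR X) M = Cᴴ * C := by
    funext pq qq
    obtain ⟨g, j, l⟩ := pq
    obtain ⟨g', j', l'⟩ := qq
    show Emap18' dL dR (fun a b => M (g, a) (g', b)) ⟨j, l⟩ ⟨j', l'⟩ = _
    rw [Matrix.mul_apply]
    simp only [conjTranspose_apply]
    rw [Fintype.sum_prod_type_right, ← Finset.univ_sigma_univ, Finset.sum_sigma]
    by_cases hj : j' = j
    · subst hj
      show dite _ _ _ = _
      rw [dif_pos rfl]
      rw [Finset.sum_eq_single j' (fun i _ hij => ?_) (fun h => absurd (Finset.mem_univ _) h)]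
      · refine Finset.sum_congr rfl fun r _ => ?_
        simp only [hC, dif_pos rfl, Fin.cast_eq_self]
        exact (hMent _ _).symm
      · refine Finset.sum_eq_zero fun r _ => Finset.sum_eq_zero fun e _ => ?_
        simp only [hC]
        rw [dif_neg (fun h : j' = i => hij h.symm), star_zero, zero_mul]
    · show dite _ _ _ = _
      rw [dif_neg hj]
      refine (Finset.sum_eq_zero fun i _ => Finset.sum_eq_zero fun r _ =>
        Finset.sum_eq_zero fun e _ => ?_).symm
      by_cases hi : j = i
      · simp only [hC]
        rw [dif_neg (fun h : j' = i => hj (h.trans hi.symm)), mul_zero]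
      · simp only [hC]
        rw [dif_neg hi, star_zero, zero_mul]
  rw [key]
  exact Matrix.posSemidef_conjTranspose_mul_self C

lemma Rcp18 {m : ℕ} (dL dR : Fin m → ℕ)
    (ω : (i : Fin m) → Matrix (Fin (dR i)) (Fin (dR i)) ℂ)
    (hωpsd : ∀ i, (ω i).PosSemidef) (d : ℕ)
    (M : Matrix (Fin d × ((i : Fin m) × Fin (dL i)))
         (Fin d × ((i : Fin m) × Fin (dL i))) ℂ)
    (hM : M.PosSemidef) :
    (tensorId18 (fun X => Rmap18' dL dR ω X) M).PosSemidef := by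
  classical
  obtain ⟨B, hBH, hBB⟩ := psd_sqrt18 hM
  have hMent : ∀ a b, ∑ e, star (B e a) * B e b = M a b := by
    intro a b
    have : ∀ e, star (B e a) = Bᴴ a e := fun e => rfl
    simp_rw [this]
    rw [← Matrix.mul_apply, hBH, hBB]
  choose W hWH hWW using fun i => psd_sqrt18 (hωpsd i)
  have hWent : ∀ i r r', ∑ s, star (W i s r) * W i s r' = ω i r r' := by
    intro i r r'
    have h1 : ∀ s, star (W i s r) = (W i)ᴴ r s := fun s => rfl
    simp_rw [h1]
    rw [← Matrix.mul_apply, hWH i, hWW i]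
  set C : Matrix ((Fin d × ((i : Fin m) × Fin (dL i))) × ((i : Fin m) × Fin (dR i)))
      (Fin d × ((i : Fin m) × (Fin (dL i) × Fin (dR i)))) ℂ :=
    fun k q => if h : q.2.1 = k.2.1 then
        B k.1 (q.1, ⟨q.2.1, q.2.2.1⟩) * W q.2.1 (Fin.cast (congrArg dR h).symm k.2.2) q.2.2.2
      else 0 with hC
  have key : tensorId18 (fun X => Rmap18' dL dR ω X) M = Cᴴ * C := by
    funext pq qq
    obtain ⟨g, j, l, r⟩ := pq
    obtain ⟨g', j', l', r'⟩ := qq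
    show Rmap18' dL dR ω (fun a b => M (g, a) (g', b)) ⟨j, (l, r)⟩ ⟨j', (l', r')⟩ = _
    rw [Matrix.mul_apply]
    simp only [conjTranspose_apply]
    rw [Fintype.sum_prod_type_right, ← Finset.univ_sigma_univ, Finset.sum_sigma]
    by_cases hj : j' = j
    · subst hj
      show dite _ _ _ = _
      rw [dif_pos rfl]
      rw [Finset.sum_eq_single j' (fun i _ hij => ?_) (fun h => absurd (Finset.mem_univ _) h)]
      · have hterm : ∀ (s : Fin (dR j')) (e : Fin d × ((i : Fin m) × Fin (dL i))),
            star (C (e, ⟨j', s⟩) (g, ⟨j', (l, r)⟩)) * C (e, ⟨j', s⟩) (g', ⟨j', (l', r')⟩) =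
            (star (B e (g, ⟨j', l⟩)) * B e (g', ⟨j', l'⟩)) *
              (star (W j' s r) * W j' s r') := by
          intro s e
          simp only [hC, dif_pos rfl, Fin.cast_eq_self, star_mul']
          ring
        simp_rw [hterm]
        simp_rw [← Finset.sum_mul, ← Finset.mul_sum]
        rw [hMent, hWent]
        simp [Fin.cast_eq_self]
      · refine Finset.sum_eq_zero fun s _ => Finset.sum_eq_zero fun e _ => ?_
        simp only [hC]
        rw [dif_neg (fun h : j' = i => hij h.symm), star_zero, zero_mul]
    · show dite _ _ _ = _
      rw [dif_neg hj]
      refine (Finset.sum_eq_zero fun i _ => Finset.sum_eq_zero fun s _ =>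
        Finset.sum_eq_zero fun e _ => ?_).symm
      by_cases hi : j = i
      · simp only [hC]
        rw [dif_neg (fun h : j' = i => hj (h.trans hi.symm)), mul_zero]
      · simp only [hC]
        rw [dif_neg hi, star_zero, zero_mul]
  rw [key]
  exact Matrix.posSemidef_conjTranspose_mul_self C

/-- Koashi–Imoto achievability: a state of the form
ρ_AB = ⊕_i p_i ρ_{AB_i^L} ⊗ ω_{B_i^R} on H_A ⊗ (⊕_i H_{B_i^L} ⊗ H_{B_i^R}) can be
exactly locally compressed on B to H_B̃ = ⊕_i H_{B_i^L}: there are CPTP maps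
E : B(H_B) → B(H_B̃) and R : B(H_B̃) → B(H_B) with (id_A ⊗ R)∘(id_A ⊗ E)(ρ_AB) = ρ_AB. -/
theorem stmt18 (dA : ℕ) (m : ℕ) (dL dR : Fin m → ℕ)
    (p : Fin m → ℝ) (hp : ∀ i, 0 ≤ p i) (hp1 : ∑ i, p i = 1)
    (ρ : (i : Fin m) → Matrix (Fin dA × Fin (dL i)) (Fin dA × Fin (dL i)) ℂ)
    (hρpsd : ∀ i, (ρ i).PosSemidef) (hρtr : ∀ i, (ρ i).trace = 1)
    (ω : (i : Fin m) → Matrix (Fin (dR i)) (Fin (dR i)) ℂ)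
    (hωpsd : ∀ i, (ω i).PosSemidef) (hωtr : ∀ i, (ω i).trace = 1)
    (ρAB : Matrix (Fin dA × ((i : Fin m) × (Fin (dL i) × Fin (dR i))))
                  (Fin dA × ((i : Fin m) × (Fin (dL i) × Fin (dR i)))) ℂ)
    (hρAB : ρAB = fun a b =>
      match a, b with
      | (aa, ⟨i, (l, r)⟩), (aa', ⟨j, (l', r')⟩) =>
        if h : j = i
        then (p i : ℂ) * ρ i (aa, l) (aa', Fin.cast (congrArg dL h) l') *
              ω i r (Fin.cast (congrArg dR h) r')
        else 0) :
    ∃ (E : Matrix ((i : Fin m) × (Fin (dL i) × Fin (dR i)))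
              ((i : Fin m) × (Fin (dL i) × Fin (dR i))) ℂ →ₗ[ℂ]
            Matrix ((i : Fin m) × Fin (dL i)) ((i : Fin m) × Fin (dL i)) ℂ)
      (R : Matrix ((i : Fin m) × Fin (dL i)) ((i : Fin m) × Fin (dL i)) ℂ →ₗ[ℂ]
            Matrix ((i : Fin m) × (Fin (dL i) × Fin (dR i)))
              ((i : Fin m) × (Fin (dL i) × Fin (dR i))) ℂ),
      IsCPTP18 E ∧ IsCPTP18 R ∧
        (∀ X, E X = fun q q' =>
          match q, q' with
          | ⟨i, l⟩, ⟨j, l'⟩ =>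
            if h : j = i
            then ∑ r : Fin (dR i), X ⟨i, (l, r)⟩ ⟨i, (Fin.cast (congrArg dL h) l', r)⟩
            else 0) ∧
        (∀ Y, R Y = fun q q' =>
          match q, q' with
          | ⟨i, (l, r)⟩, ⟨j, (l', r')⟩ =>
            if h : j = i
            then Y ⟨i, l⟩ ⟨i, Fin.cast (congrArg dL h) l'⟩ * ω i r (Fin.cast (congrArg dR h) r')
            else 0) ∧
        tensorId18 (fun X => R X) (tensorId18 (fun X => E X) ρAB) = ρAB := by
  refine ⟨Emap18 dL dR, Rmap18 dL dR ω, ⟨Etr18 dL dR, Ecp18 dL dR⟩,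
    ⟨Rtr18 dL dR ω hωtr, Rcp18 dL dR ω hωpsd⟩, ?_, ?_, ?_⟩
  · intro X
    funext q q'
    obtain ⟨i, l⟩ := q
    obtain ⟨j, l'⟩ := q'
    rfl
  · intro Y
    funext q q'
    obtain ⟨i, l, r⟩ := q
    obtain ⟨j, l', r'⟩ := q'
    rfl
  · have hE : tensorId18 (fun X => Emap18 dL dR X) ρAB =
        fun (a b : Fin dA × ((i : Fin m) × Fin (dL i))) =>
          if h : b.2.1 = a.2.1
          then (p a.2.1 : ℂ) * ρ a.2.1 (a.1, a.2.2) (b.1, Fin.cast (congrArg dL h) b.2.2)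
          else 0 := by
      funext pq qq
      obtain ⟨g, j, l⟩ := pq
      obtain ⟨g', j', l'⟩ := qq
      show Emap18' dL dR (fun a b => ρAB (g, a) (g', b)) ⟨j, l⟩ ⟨j', l'⟩ = _
      subst hρAB
      by_cases hj : j' = j
      · subst hj
        show dite _ _ _ = dite _ _ _
        rw [dif_pos rfl, dif_pos rfl]
        have h1 : ∑ r : Fin (dR j'), ω j' r r = 1 := hωtr j'
        simp only [Fin.cast_eq_self, dif_pos rfl, dite_true]
        rw [← Finset.mul_sum, h1, mul_one]
      · show dite _ _ _ = dite _ _ _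
        rw [dif_neg hj, dif_neg hj]
    rw [hE, hρAB]
    funext pq qq
    obtain ⟨g, j, l, r⟩ := pq
    obtain ⟨g', j', l', r'⟩ := qq
    show Rmap18' dL dR ω
        (fun a b => (fun (a b : Fin dA × ((i : Fin m) × Fin (dL i))) =>
          if h : b.2.1 = a.2.1
          then (p a.2.1 : ℂ) * ρ a.2.1 (a.1, a.2.2) (b.1, Fin.cast (congrArg dL h) b.2.2)
          else 0) (g, a) (g', b)) ⟨j, (l, r)⟩ ⟨j', (l', r')⟩ = _
    by_cases hj : j' = j
    · subst hj
      show dite _ _ _ = dite _ _ _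
      rw [dif_pos rfl, dif_pos rfl]
      show dite _ _ _ * _ = _
      rw [dif_pos rfl]
      simp [Fin.cast_eq_self]
    · show dite _ _ _ = dite _ _ _
      rw [dif_neg hj, dif_neg hj]
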